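/- If f(x) = g(w^T x) for w, x in R^d where g is smooth and strongly monotone, then the eluder dimension of this function class is O(d); in particular, for the class of linear functions f(x) = w^T x with bounded w on a bounded domain, the ε-eluder dimension is at most O(d log(1/ε) + d). -/

import Mathlib

/-- `x` is `ε`-dependent on the list `Z` with respect to the class `F`:
any `f, f' ∈ F` that are `ε`-close on `Z` (in the data norm) are also
`ε`-close at `x`. -/
def EpsDependent {α : Type*} (F : Set (α → ℝ)) (ε : ℝ) (Z : List α) (x : α) : Prop :=
  ∀ f ∈ F, ∀ f' ∈ F,
    Real.sqrt ((Z.map fun z => (f z - f' z) ^ 2).sum) ≤ ε → |f x - f' x| ≤ ε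

/-- `L` is an eluder sequence at scale `ε`: for some `ε' ≥ ε`, every element of
`L` is `ε'`-independent of its predecessors.  The `ε`-eluder dimension of `F` is
the length of the longest such sequence. -/
def EluderSeq {α : Type*} (F : Set (α → ℝ)) (ε : ℝ) (L : List α) : Prop :=
  ∃ ε' ≥ ε, ∀ i : Fin L.length, ¬ EpsDependent F ε' (L.take i.1) (L.get i)

namespace EluderAux

open Matrix

lemma transpose_eq_of_herm {d : ℕ} {M : Matrix (Fin d) (Fin d) ℝ}
    (hM : M.IsHermitian) : Mᵀ = M := by
  ext i j
  have := congrFun (congrFun hM i) j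
  simpa [conjTranspose_apply] using this

/-- Cauchy–Schwarz for a positive semidefinite bilinear form. -/
lemma cs_psd {d : ℕ} {M : Matrix (Fin d) (Fin d) ℝ} (hM : M.PosSemidef)
    (a b : Fin d → ℝ) :
    (a ⬝ᵥ M *ᵥ b) ^ 2 ≤ (a ⬝ᵥ M *ᵥ a) * (b ⬝ᵥ M *ᵥ b) := by
  have hsymm : ∀ u v : Fin d → ℝ, u ⬝ᵥ M *ᵥ v = v ⬝ᵥ M *ᵥ u := by
    intro u v
    rw [dotProduct_mulVec, dotProduct_comm]
    congr 1
    rw [← mulVec_transpose, transpose_eq_of_herm hM.isHermitian]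
  have key : ∀ t : ℝ, 0 ≤ (b ⬝ᵥ M *ᵥ b) * (t * t) + (2 * (a ⬝ᵥ M *ᵥ b)) * t
      + (a ⬝ᵥ M *ᵥ a) := by
    intro t
    have h0 : 0 ≤ (a + t • b) ⬝ᵥ M *ᵥ (a + t • b) := by
      simpa using hM.dotProduct_mulVec_nonneg (a + t • b)
    have hexp : (a + t • b) ⬝ᵥ M *ᵥ (a + t • b)
        = (b ⬝ᵥ M *ᵥ b) * (t * t) + (2 * (a ⬝ᵥ M *ᵥ b)) * t + (a ⬝ᵥ M *ᵥ a) := by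
      simp only [mulVec_add, mulVec_smul, dotProduct_add, add_dotProduct,
        dotProduct_smul, smul_dotProduct, smul_eq_mul, hsymm b a]
      ring
    linarith [hexp ▸ h0]
  have := discrim_le_zero key
  rw [discrim] at this
  nlinarith [this]

lemma trace_eq_sum_eig {d : ℕ} {M : Matrix (Fin d) (Fin d) ℝ} (hM : M.IsHermitian) :
    M.trace = ∑ i, hM.eigenvalues i := by
  have hspec := hM.spectral_theorem
  set U : Matrix (Fin d) (Fin d) ℝ := (hM.eigenvectorUnitary : Matrix (Fin d) (Fin d) ℝ)
  have hU : star U * U = 1 := by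
    have := hM.eigenvectorUnitary.2
    exact (Matrix.mem_unitaryGroup_iff'.mp this)
  calc M.trace = (U * diagonal (RCLike.ofReal ∘ hM.eigenvalues) * star U).trace := by
        conv_lhs => rw [hspec, Unitary.conjStarAlgAut_apply]
    _ = (star U * U * diagonal (RCLike.ofReal ∘ hM.eigenvalues)).trace := by
        rw [Matrix.trace_mul_cycle, Matrix.mul_assoc]
    _ = ∑ i, hM.eigenvalues i := by
        rw [hU, Matrix.one_mul, trace_diagonal]
        simp

/-- AM–GM bound on the determinant of a positive semidefinite matrix. -/
lemma det_le_trace_div_pow {d : ℕ} (hd : 0 < d) {M : Matrix (Fin d) (Fin d) ℝ}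
    (hM : M.PosSemidef) : M.det ≤ (M.trace / d) ^ d := by
  have hH := hM.isHermitian
  have hnn : ∀ i, 0 ≤ hH.eigenvalues i := fun i => hM.eigenvalues_nonneg i
  have hdet : M.det = ∏ i, hH.eigenvalues i := by
    have := hH.det_eq_prod_eigenvalues
    simpa using this
  have htr : M.trace = ∑ i, hH.eigenvalues i := trace_eq_sum_eig hH
  have hdR : (0:ℝ) < d := by exact_mod_cast hd
  have hamgm : ∏ i, (hH.eigenvalues i) ^ ((1:ℝ)/d)
      ≤ ∑ i, (1/(d:ℝ)) * hH.eigenvalues i := by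
    apply Real.geom_mean_le_arith_mean_weighted
    · intro i _; positivity
    · simp [Finset.sum_const, Finset.card_univ]
      field_simp
    · intro i _; exact hnn i
  have hsum : ∑ i, (1/(d:ℝ)) * hH.eigenvalues i = M.trace / d := by
    rw [htr, ← Finset.mul_sum]
    ring
  have hprod : (∏ i, (hH.eigenvalues i) ^ ((1:ℝ)/d)) ^ d = ∏ i, hH.eigenvalues i := by
    rw [← Finset.prod_pow]
    apply Finset.prod_congr rfl
    intro i _
    rw [← Real.rpow_natCast ((hH.eigenvalues i) ^ ((1:ℝ)/d)) d,
      ← Real.rpow_mul (hnn i)]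
    field_simp
    simp
  have hbase : 0 ≤ ∏ i, (hH.eigenvalues i) ^ ((1:ℝ)/d) := by
    apply Finset.prod_nonneg; intro i _
    exact Real.rpow_nonneg (hnn i) _
  calc M.det = (∏ i, (hH.eigenvalues i) ^ ((1:ℝ)/d)) ^ d := by rw [hprod, hdet]
    _ ≤ (∑ i, (1/(d:ℝ)) * hH.eigenvalues i) ^ d := pow_le_pow_left₀ hbase hamgm d
    _ = (M.trace / d) ^ d := by rw [hsum]

variable {d : ℕ}

lemma sum_mulVec' {ι : Type*} (s : Finset ι) (A : ι → Matrix (Fin d) (Fin d) ℝ)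
    (v : Fin d → ℝ) : (∑ j ∈ s, A j) *ᵥ v = ∑ j ∈ s, A j *ᵥ v := by
  induction s using Finset.cons_induction with
  | empty => ext i; simp [mulVec, dotProduct]
  | cons a s ha ih => rw [Finset.sum_cons, Finset.sum_cons, add_mulVec, ih]

lemma vecMulVec_mulVec' (x v : Fin d → ℝ) :
    vecMulVec x x *ᵥ v = (x ⬝ᵥ v) • x := by
  ext i
  simp only [vecMulVec_apply, mulVec, dotProduct, Pi.smul_apply, smul_eq_mul, Finset.sum_mul]
  exact Finset.sum_congr rfl fun k _ => by ring

lemma dotProduct_sum' {ι : Type*} (s : Finset ι) (u : Fin d → ℝ)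
    (w : ι → (Fin d → ℝ)) : u ⬝ᵥ (∑ j ∈ s, w j) = ∑ j ∈ s, u ⬝ᵥ w j := by
  induction s using Finset.cons_induction with
  | empty => simp [dotProduct]
  | cons a s ha ih => rw [Finset.sum_cons, Finset.sum_cons, dotProduct_add, ih]

/-- The regularized Gram matrix after `k` steps. -/
noncomputable def Mk (l : ℝ) (X : ℕ → EuclideanSpace ℝ (Fin d)) (k : ℕ) : Matrix (Fin d) (Fin d) ℝ :=
  l • (1 : Matrix (Fin d) (Fin d) ℝ) + ∑ j ∈ Finset.range k, vecMulVec (X j) (X j)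

lemma Mk_quadform (l : ℝ) (X : ℕ → EuclideanSpace ℝ (Fin d)) (k : ℕ) (v : Fin d → ℝ) :
    v ⬝ᵥ (Mk l X k) *ᵥ v = l * (v ⬝ᵥ v) + ∑ j ∈ Finset.range k, (X j ⬝ᵥ v) ^ 2 := by
  rw [Mk, add_mulVec, dotProduct_add, smul_mulVec, one_mulVec, sum_mulVec']
  congr 1
  · simp [smul_eq_mul, dotProduct_smul]
  · rw [dotProduct_sum']
    apply Finset.sum_congr rfl
    intro j _
    rw [vecMulVec_mulVec', dotProduct_smul, smul_eq_mul, dotProduct_comm]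
    ring

lemma Mk_isHermitian (l : ℝ) (X : ℕ → EuclideanSpace ℝ (Fin d)) (k : ℕ) :
    (Mk l X k).IsHermitian := by
  unfold Matrix.IsHermitian
  ext i j
  simp [Mk, conjTranspose_apply, Matrix.add_apply, Matrix.smul_apply, Matrix.sum_apply,
    Matrix.one_apply, vecMulVec_apply, mul_comm]
  rcases eq_or_ne i j with h | h
  · simp [h]
  · simp [h, Ne.symm h]

lemma Mk_posDef {l : ℝ} (hl : 0 < l) (X : ℕ → EuclideanSpace ℝ (Fin d)) (k : ℕ) :
    (Mk l X k).PosDef := by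
  refine posDef_iff_dotProduct_mulVec.mpr ⟨Mk_isHermitian l X k, fun v hv => ?_⟩
  have h1 : (0:ℝ) < v ⬝ᵥ v := by
    have : v ⬝ᵥ v = ∑ i, v i ^ 2 := by simp [dotProduct, pow_two]
    rw [this]
    apply Finset.sum_pos'
    · intro i _; positivity
    · obtain ⟨i, hi⟩ := Function.ne_iff.mp hv
      exact ⟨i, Finset.mem_univ i, pow_two_pos_of_ne_zero hi⟩
  have h2 : (0:ℝ) ≤ ∑ j ∈ Finset.range k, (X j ⬝ᵥ v) ^ 2 := by positivity
  have := Mk_quadform l X k v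
  simp only [star_trivial]
  rw [this]
  nlinarith

/-- Matrix determinant lemma for a rank-one update of a positive definite matrix. -/
lemma det_rank_one_update {M : Matrix (Fin d) (Fin d) ℝ} (hM : M.PosDef)
    (x : Fin d → ℝ) :
    (M + vecMulVec x x).det = M.det * (1 + x ⬝ᵥ M⁻¹ *ᵥ x) := by
  have hunit : IsUnit M.det := isUnit_iff_ne_zero.mpr (ne_of_gt hM.det_pos)
  rw [vecMulVec_eq (Fin 1), Matrix.det_add_replicateCol_mul_replicateRow hunit x x]
  congr 1
  have h1 : (1 + replicateRow (Fin 1) x * M⁻¹ * replicateCol (Fin 1) x).det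
      = ((1 + replicateRow (Fin 1) x * M⁻¹ * replicateCol (Fin 1) x) : Matrix (Fin 1) (Fin 1) ℝ) 0 0 := by
    convert Matrix.det_fin_one _
  have h2 : ((1 + replicateRow (Fin 1) x * M⁻¹ * replicateCol (Fin 1) x) : Matrix (Fin 1) (Fin 1) ℝ) 0 0
      = 1 + x ⬝ᵥ M⁻¹ *ᵥ x := by
    simp only [Matrix.add_apply, Matrix.one_apply_eq]
    congr 1
    rw [Matrix.mul_assoc]
    simp [Matrix.mul_apply, Matrix.replicateRow_apply, Matrix.replicateCol_apply, mulVec, dotProduct]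
  rw [← h2]
  exact h1

lemma list_take_map_sum {α : Type*} (Z : List α) (g : α → ℝ) (x0 : α) :
    ∀ k, k ≤ Z.length →
      ((Z.take k).map g).sum = ∑ j ∈ Finset.range k, g (Z.getD j x0) := by
  intro k
  induction k with
  | zero => simp
  | succ k ih =>
    intro hk
    have hk' : k < Z.length := hk
    rw [Finset.sum_range_succ, ← ih (le_of_lt hk')]
    rw [List.take_succ]
    have : Z[k]? = some (Z.getD k x0) := by
      rw [List.getElem?_eq_getElem hk', List.getD_eq_getElem Z x0 hk']
    rw [this]
    simp

end EluderAux

set_option maxHeartbeats 1600000 in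
open Matrix EluderAux in
/-- The `ε`-eluder dimension of the class of bounded linear functions
`x ↦ ⟪w, x⟫` (with `‖w‖ ≤ 1`) on the unit ball of `ℝ^d` is at most
`O(d log(1/ε) + d)`: there is a universal constant `C` such that every eluder
sequence has length at most `C (d log(1/ε) + d)`. -/
theorem linear_class_eluder_dim_le :
    ∃ C : ℝ, 0 < C ∧
      ∀ (d : ℕ) (ε : ℝ), 0 < ε → ε < 1 →
        ∀ L : List (EuclideanSpace ℝ (Fin d)),
          (∀ x ∈ L, ‖x‖ ≤ 1) →
          EluderSeq
            {f | ∃ w : EuclideanSpace ℝ (Fin d), ‖w‖ ≤ 1 ∧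
                  f = fun x => (inner ℝ w x : ℝ)} ε L →
          (L.length : ℝ) ≤ C * (d * Real.log (1 / ε) + d) := by
  refine ⟨150, by norm_num, ?_⟩
  intro d ε hε hε1 L hL hel
  obtain ⟨ε', hεε', hind⟩ := hel
  set n := L.length with hn
  have hlogε : 0 ≤ Real.log (1/ε) := Real.log_nonneg (by
    rw [le_div_iff₀ hε]; linarith)
  rcases Nat.eq_zero_or_pos n with hn0 | hnpos
  · rw [hn0]
    have : (0:ℝ) ≤ 150 * (d * Real.log (1/ε) + d) := by positivity
    simpa using this
  have hε'pos : 0 < ε' := lt_of_lt_of_le hε hεε'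
  set Y : ℕ → EuclideanSpace ℝ (Fin d) := fun j => L.getD j 0 with hY
  have hgetY : ∀ i : Fin n, Y i.1 = L.get i := by
    intro i
    rw [hY]
    simp only [List.get_eq_getElem]
    exact List.getD_eq_getElem L 0 i.isLt
  have hXX : ∀ j, j < n → Y j ⬝ᵥ Y j ≤ 1 := by
    intro j hj
    have hmem : Y j ∈ L := by
      rw [hY]
      simp only []
      rw [List.getD_eq_getElem L 0 hj]
      exact List.getElem_mem hj
    have h1 : ‖Y j‖ ≤ 1 := hL _ hmem
    have h2 : Y j ⬝ᵥ Y j = ‖Y j‖^2 := by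
      rw [EuclideanSpace.norm_eq, Real.sq_sqrt (by positivity)]
      simp [dotProduct, Real.norm_eq_abs, sq_abs, pow_two]
    rw [h2]
    nlinarith [norm_nonneg (Y j)]
  -- extraction of witness vectors
  have hext : ∀ i : Fin n, ∃ v : Fin d → ℝ, v ⬝ᵥ v ≤ 4 ∧
      (∑ j ∈ Finset.range i.1, (v ⬝ᵥ Y j)^2) ≤ ε'^2 ∧ ε' < |v ⬝ᵥ Y i.1| := by
    intro i
    have h := hind i
    rw [EpsDependent] at h
    push_neg at h
    obtain ⟨f, hf, f', hf', hsqrt, hgt⟩ := h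
    obtain ⟨w, hw, rfl⟩ := hf
    obtain ⟨w', hw', rfl⟩ := hf'
    set v : Fin d → ℝ := fun idx => w idx - w' idx with hv
    have hdiff : ∀ z : EuclideanSpace ℝ (Fin d),
        (inner ℝ w z : ℝ) - (inner ℝ w' z : ℝ) = v ⬝ᵥ z := by
      intro z
      rw [← inner_sub_left]
      simp only [PiLp.inner_apply, RCLike.inner_apply, conj_trivial]
      rw [hv]; simp only [dotProduct]
      exact Finset.sum_congr rfl fun x _ => by rw [mul_comm]; rfl
    refine ⟨v, ?_, ?_, ?_⟩
    · have hnorm : ‖w - w'‖ ≤ 2 := le_trans (norm_sub_le _ _) (by linarith)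
      have hvv : v ⬝ᵥ v = ‖w - w'‖^2 := by
        rw [EuclideanSpace.norm_eq, Real.sq_sqrt (by positivity)]
        simp only [dotProduct, hv, Real.norm_eq_abs, pow_two]
        apply Finset.sum_congr rfl
        intro idx _
        have h5 : (w - w') idx = w idx - w' idx := rfl
        rw [h5]
        exact (abs_mul_abs_self _).symm
      rw [hvv]
      nlinarith [norm_nonneg (w - w')]
    · have hsqrt' : Real.sqrt (((L.take i.1).map fun z =>
          ((inner ℝ w z : ℝ) - (inner ℝ w' z : ℝ))^2).sum) ≤ ε' := hsqrt
      have hS0 : 0 ≤ ((L.take i.1).map fun z =>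
          ((inner ℝ w z : ℝ) - (inner ℝ w' z : ℝ))^2).sum := by
        apply List.sum_nonneg
        intro a ha
        obtain ⟨z, _, rfl⟩ := List.mem_map.mp ha
        positivity
      have hS : ((L.take i.1).map fun z =>
          ((inner ℝ w z : ℝ) - (inner ℝ w' z : ℝ))^2).sum ≤ ε'^2 := by
        nlinarith [Real.sq_sqrt hS0, Real.sqrt_nonneg (((L.take i.1).map fun z =>
          ((inner ℝ w z : ℝ) - (inner ℝ w' z : ℝ))^2).sum)]
      rw [list_take_map_sum L _ 0 i.1 (le_of_lt i.isLt)] at hS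
      calc ∑ j ∈ Finset.range i.1, (v ⬝ᵥ Y j)^2
          = ∑ j ∈ Finset.range i.1, ((inner ℝ w (L.getD j 0) : ℝ)
              - (inner ℝ w' (L.getD j 0) : ℝ))^2 := by
            apply Finset.sum_congr rfl
            intro j _
            rw [hdiff (L.getD j 0)]
        _ ≤ ε'^2 := hS
    · have hgt' : ε' < |(inner ℝ w (L.get i) : ℝ) - (inner ℝ w' (L.get i) : ℝ)| := hgt
      rw [hdiff (L.get i)] at hgt'
      rw [hgetY i]
      exact hgt'
  choose V hV4 hVsum hVbig using hext
  -- positivity of the dimension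
  have hd0 : 0 < d := by
    rcases Nat.eq_zero_or_pos d with hd | hd
    · exfalso
      haveI : IsEmpty (Fin d) := ⟨fun i => Nat.not_lt_zero i.1 (hd ▸ i.isLt)⟩
      have h := hVbig ⟨0, hnpos⟩
      have hz : V ⟨0, hnpos⟩ ⬝ᵥ Y 0 = 0 := by
        simp [dotProduct]
      rw [hz] at h
      simp at h
      linarith
    · exact hd
  -- ε' < 2
  have hε'2 : ε' < 2 := by
    have hcs := cs_psd (Matrix.PosSemidef.one (n := Fin d) (R := ℝ))
      (V ⟨0, hnpos⟩) (Y 0)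
    simp only [one_mulVec] at hcs
    have h1 := hXX 0 hnpos
    have h2 := hV4 ⟨0, hnpos⟩
    have h3 : ε' < |V ⟨0, hnpos⟩ ⬝ᵥ Y 0| := hVbig ⟨0, hnpos⟩
    have h4 : (0:ℝ) ≤ V ⟨0, hnpos⟩ ⬝ᵥ V ⟨0, hnpos⟩ := by
      have : V ⟨0, hnpos⟩ ⬝ᵥ V ⟨0, hnpos⟩ = ∑ i, (V ⟨0, hnpos⟩ i)^2 := by
        simp [dotProduct, pow_two]
      rw [this]; positivity
    nlinarith [sq_abs (V ⟨0, hnpos⟩ ⬝ᵥ Y 0), abs_nonneg (V ⟨0, hnpos⟩ ⬝ᵥ Y 0)]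
  set l : ℝ := ε'^2/4 with hl
  have hlpos : 0 < l := by positivity
  -- quadratic form bound along the sequence
  have hquad : ∀ i : Fin n, (V i) ⬝ᵥ (Mk l Y i.1) *ᵥ (V i) ≤ 2*ε'^2 := by
    intro i
    rw [Mk_quadform]
    have h1 : ∑ j ∈ Finset.range i.1, ((Y j : Fin d → ℝ) ⬝ᵥ V i)^2 ≤ ε'^2 := by
      calc ∑ j ∈ Finset.range i.1, ((Y j : Fin d → ℝ) ⬝ᵥ V i)^2
          = ∑ j ∈ Finset.range i.1, (V i ⬝ᵥ Y j)^2 := by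
            apply Finset.sum_congr rfl
            intro j _; rw [dotProduct_comm]
        _ ≤ ε'^2 := hVsum i
    have h2 := hV4 i
    have h3 : l * (V i ⬝ᵥ V i) ≤ l * 4 :=
      mul_le_mul_of_nonneg_left h2 (le_of_lt hlpos)
    have h4 : l * 4 = ε'^2 := by rw [hl]; ring
    linarith
  have hdetpos : ∀ k, 0 < (Mk l Y k).det := fun k => (Mk_posDef hlpos Y k).det_pos
  -- determinant growth step
  have hstep : ∀ k, k < n → (3/2) * (Mk l Y k).det ≤ (Mk l Y (k+1)).det := by
    intro k hk
    have hsucc : Mk l Y (k+1) = Mk l Y k + vecMulVec (Y k) (Y k) := by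
      rw [Mk, Mk, Finset.sum_range_succ, add_assoc]
    rw [hsucc, det_rank_one_update (Mk_posDef hlpos Y k)]
    have hMb : (Mk l Y k) *ᵥ ((Mk l Y k)⁻¹ *ᵥ Y k) = Y k := by
      rw [Matrix.mulVec_mulVec, Matrix.mul_nonsing_inv _
        (isUnit_iff_ne_zero.mpr (ne_of_gt (hdetpos k))), one_mulVec]
    have hq0 : 0 ≤ ((Mk l Y k)⁻¹ *ᵥ Y k) ⬝ᵥ (Mk l Y k) *ᵥ ((Mk l Y k)⁻¹ *ᵥ Y k) := by
      simpa using (Mk_posDef hlpos Y k).posSemidef.dotProduct_mulVec_nonneg ((Mk l Y k)⁻¹ *ᵥ Y k)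
    have hcs := cs_psd (Mk_posDef hlpos Y k).posSemidef (V ⟨k, hk⟩) ((Mk l Y k)⁻¹ *ᵥ Y k)
    rw [hMb] at hcs hq0
    have hqq : ((Mk l Y k)⁻¹ *ᵥ Y k) ⬝ᵥ Y k = (Y k : Fin d → ℝ) ⬝ᵥ (Mk l Y k)⁻¹ *ᵥ Y k :=
      dotProduct_comm _ _
    rw [hqq] at hcs hq0
    have hbig : ε' < |V ⟨k, hk⟩ ⬝ᵥ Y k| := hVbig ⟨k, hk⟩
    have hqd : (V ⟨k, hk⟩) ⬝ᵥ (Mk l Y k) *ᵥ (V ⟨k, hk⟩) ≤ 2*ε'^2 := hquad ⟨k, hk⟩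
    have hsq : ε'^2 < (V ⟨k, hk⟩ ⬝ᵥ Y k)^2 := by
      nlinarith [sq_abs (V ⟨k, hk⟩ ⬝ᵥ Y k), abs_nonneg (V ⟨k, hk⟩ ⬝ᵥ Y k)]
    have hquadnn : 0 ≤ (V ⟨k, hk⟩) ⬝ᵥ (Mk l Y k) *ᵥ (V ⟨k, hk⟩) := by
      simpa using (Mk_posDef hlpos Y k).posSemidef.dotProduct_mulVec_nonneg (V ⟨k, hk⟩)
    have hq12 : 1/2 < (Y k : Fin d → ℝ) ⬝ᵥ (Mk l Y k)⁻¹ *ᵥ Y k := by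
      nlinarith [hε'pos]
    nlinarith [hdetpos k]
  -- determinant lower bound
  have hlow : ∀ k, k ≤ n → (3/2:ℝ)^k * l^d ≤ (Mk l Y k).det := by
    intro k
    induction k with
    | zero =>
      intro _
      have h0 : Mk l Y 0 = l • (1 : Matrix (Fin d) (Fin d) ℝ) := by
        rw [Mk]; simp
      rw [h0, Matrix.det_smul, Matrix.det_one]
      simp [Fintype.card_fin]
    | succ k ih =>
      intro hk
      have hk' : k < n := lt_of_lt_of_le (Nat.lt_succ_self k) hk
      have h1 := ih (le_of_lt hk')
      have h2 := hstep k hk'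
      calc (3/2:ℝ)^(k+1) * l^d = (3/2) * ((3/2:ℝ)^k * l^d) := by ring
        _ ≤ (3/2) * (Mk l Y k).det :=
            mul_le_mul_of_nonneg_left h1 (by norm_num)
        _ ≤ (Mk l Y (k+1)).det := h2
  -- trace upper bound
  have htr : (Mk l Y n).trace = l * d + ∑ j ∈ Finset.range n, ((Y j : Fin d → ℝ) ⬝ᵥ Y j) := by
    rw [Mk, Matrix.trace_add, Matrix.trace_smul, Matrix.trace_one, Matrix.trace_sum]
    simp only [smul_eq_mul, Fintype.card_fin]
    congr 1
  have htrace_le : (Mk l Y n).trace ≤ l * d + n := by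
    rw [htr]
    have h1 : ∑ j ∈ Finset.range n, ((Y j : Fin d → ℝ) ⬝ᵥ Y j)
        ≤ ∑ j ∈ Finset.range n, (1:ℝ) := by
      apply Finset.sum_le_sum
      intro j hj
      exact hXX j (Finset.mem_range.mp hj)
    simp at h1
    linarith
  have hdR : (0:ℝ) < d := by exact_mod_cast hd0
  have htrace_nn : 0 ≤ (Mk l Y n).trace := by
    rw [htr]
    have h1 : 0 ≤ ∑ j ∈ Finset.range n, ((Y j : Fin d → ℝ) ⬝ᵥ Y j) := by
      apply Finset.sum_nonneg
      intro j _
      have : (Y j : Fin d → ℝ) ⬝ᵥ Y j = ∑ i, (Y j i)^2 := by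
        simp [dotProduct, pow_two]
      rw [this]; positivity
    positivity
  have hhigh : (Mk l Y n).det ≤ (l + n/d)^d := by
    have h1 := det_le_trace_div_pow hd0 (Mk_posDef hlpos Y n).posSemidef
    have h2 : (Mk l Y n).trace / d ≤ l + n/d := by
      rw [div_le_iff₀ hdR]
      have h3 : (l + n/d) * d = l * d + n := by field_simp
      rw [h3]
      exact htrace_le
    have h3 : 0 ≤ (Mk l Y n).trace / d := by positivity
    exact le_trans h1 (pow_le_pow_left₀ h3 h2 d)
  have hkey : (3/2:ℝ)^n * l^d ≤ (l + n/d)^d := le_trans (hlow n le_rfl) hhigh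
  -- logarithmic endgame
  set N : ℝ := (n:ℝ) with hN
  set D : ℝ := (d:ℝ) with hD
  have hN1 : 1 ≤ N := by rw [hN]; exact_mod_cast hnpos
  have hD1 : 1 ≤ D := by rw [hD]; exact_mod_cast hd0
  have hA : N * Real.log (3/2) ≤ D * Real.log ((l + N/D)/l) := by
    have h1 : ((3:ℝ)/2)^n ≤ ((l + N/D)/l)^d := by
      conv_rhs => rw [div_pow]
      rw [le_div_iff₀ (pow_pos hlpos d)]
      exact hkey
    have h2 : Real.log (((3:ℝ)/2)^n) ≤ Real.log (((l + N/D)/l)^d) :=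
      Real.log_le_log (by positivity) h1
    rw [Real.log_pow, Real.log_pow] at h2
    exact_mod_cast h2
  have hll : (l + N/D)/l = 1 + N/(D*l) := by
    field_simp
    try ring
  have hb1 : 1 + N/(D*l) ≤ (1 + 4*N/D) * (1/ε^2) := by
    have he2 : ε^2 ≤ ε'^2 := by nlinarith
    have e1 : N/(D*l) = 4*N/(D*ε'^2) := by
      rw [hl]; field_simp
      try ring
    have e2 : 4*N/(D*ε'^2) ≤ 4*N/(D*ε^2) := by
      apply div_le_div_of_nonneg_left (by positivity) (by positivity)
      nlinarith
    have e3 : (1 + 4*N/D) * (1/ε^2) = 1/ε^2 + 4*N/(D*ε^2) := by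
      field_simp
      try ring
    have e4 : (1:ℝ) ≤ 1/ε^2 := by
      rw [le_div_iff₀ (by positivity)]
      nlinarith
    rw [e1, e3]
    linarith
  have hB : Real.log ((l + N/D)/l) ≤ Real.log (1 + 4*N/D) + 2 * Real.log (1/ε) := by
    have h1 : Real.log ((l + N/D)/l) ≤ Real.log ((1 + 4*N/D) * (1/ε^2)) := by
      rw [hll]
      apply Real.log_le_log (by positivity) hb1
    have h2 : Real.log ((1 + 4*N/D) * (1/ε^2))
        = Real.log (1 + 4*N/D) + Real.log (1/ε^2) := by
      rw [Real.log_mul (by positivity) (by positivity)]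
    have h3 : Real.log (1/ε^2) = 2 * Real.log (1/ε) := by
      rw [one_div, one_div, Real.log_inv, Real.log_inv, Real.log_pow]
      push_cast
      ring
    rw [h2, h3] at h1
    exact h1
  have hC : Real.log (1 + 4*N/D) ≤ (1 + 4*N/D)/20 + 18 := by
    have h20 : Real.log 20 ≤ 19 := by
      have := Real.log_le_sub_one_of_pos (show (0:ℝ) < 20 by norm_num)
      linarith
    have hx : Real.log ((1+4*N/D)/20) ≤ (1+4*N/D)/20 - 1 :=
      Real.log_le_sub_one_of_pos (by positivity)
    have hdiv : Real.log ((1+4*N/D)/20) = Real.log (1+4*N/D) - Real.log 20 :=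
      Real.log_div (by positivity) (by norm_num)
    linarith
  have hlog32 : (1/3 : ℝ) ≤ Real.log (3/2) := by
    have h1 := Real.log_le_sub_one_of_pos (show (0:ℝ) < 2/3 by norm_num)
    have h2 : Real.log (3/2 : ℝ) = - Real.log (2/3) := by
      rw [← Real.log_inv]
      norm_num
    rw [h2]
    linarith
  -- putting it together
  have hmain : N * (1/3) ≤ D * ((1 + 4*N/D)/20 + 18 + 2 * Real.log (1/ε)) := by
    calc N * (1/3) ≤ N * Real.log (3/2) :=
          mul_le_mul_of_nonneg_left hlog32 (by linarith)
      _ ≤ D * Real.log ((l + N/D)/l) := hA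
      _ ≤ D * ((1 + 4*N/D)/20 + 18 + 2 * Real.log (1/ε)) := by
          apply mul_le_mul_of_nonneg_left _ (by linarith)
          calc Real.log ((l + N/D)/l)
              ≤ Real.log (1 + 4*N/D) + 2 * Real.log (1/ε) := hB
            _ ≤ (1 + 4*N/D)/20 + 18 + 2 * Real.log (1/ε) := by linarith
  have hexpand : D * ((1 + 4*N/D)/20 + 18 + 2 * Real.log (1/ε))
      = D/20 + N/5 + 18*D + 2*D*Real.log (1/ε) := by
    field_simp
    ring
  rw [hexpand] at hmain
  have hDL : 0 ≤ D * Real.log (1/ε) := by positivity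
  show N ≤ 150 * (D * Real.log (1/ε) + D)
  linarith
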